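/- With the notation of the truncation lemma (α ≥ 0, L ≥ 1, g_L, h_L as defined from a cutoff ψ with |ψ′| ≤ c/L), the function h_L is C² on [0,∞), h_L″ is bounded by a constant depending on L and α, and for all s > 0: h_L′(s)/s ≤ h_L″(s) ≤ c(α+1) h_L′(s)/s and h_L′(s) s ≤ c h_L(s), with c independent of L. -/

import Mathlib

open MeasureTheory Set

lemma aux_master (α : ℝ) (hα : 0 ≤ α)
    (ψL : ℝ → ℝ) (L : ℝ) (hL1 : 1 ≤ L)
    (hψC : ContDiff ℝ 1 ψL)
    (hψ01 : ∀ θ : ℝ, 0 ≤ ψL θ ∧ ψL θ ≤ 1)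
    (hψ1 : ∀ θ ∈ Set.Icc (0:ℝ) (3 * L / 2), ψL θ = 1)
    (hψ0 : ∀ θ : ℝ, 2 * L ≤ θ → ψL θ = 0)
    (g : ℝ → ℝ) (hg : ∀ θ, g θ = (1 + θ) ^ α)
    (gl : ℝ → ℝ) (hgl : ∀ τ, gl τ = g 0 + ∫ θ in (0:ℝ)..τ, ψL θ * deriv g θ)
    (hl : ℝ → ℝ) (hhl : ∀ s, hl s = ∫ τ in (0:ℝ)..s, τ * gl τ) :
    ContDiffOn ℝ 2 hl (Set.Ici 0) ∧
    (∃ C : ℝ, ∀ s : ℝ, 0 ≤ s → |deriv (deriv hl) s| ≤ C) ∧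
    (∀ s : ℝ, 0 < s →
        deriv hl s / s ≤ deriv (deriv hl) s ∧
        deriv (deriv hl) s ≤ (8 * 2 ^ α + 1) * (α + 1) * (deriv hl s / s)) ∧
    (∀ s : ℝ, 0 ≤ s → deriv hl s * s ≤ (8 * 2 ^ α + 1) * hl s) := by
  have hL0 : (0:ℝ) < L := lt_of_lt_of_le one_pos hL1
  set U : Set ℝ := Set.Ioi (-1 : ℝ) with hUdef
  have hU : IsOpen U := isOpen_Ioi
  have hmemU : ∀ ⦃s : ℝ⦄, 0 ≤ s → s ∈ U := fun s hs => by
    simp only [hUdef, Set.mem_Ioi]; linarith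
  -- derivative of g on U
  have h1 : ∀ θ ∈ U, HasDerivAt g (α * (1+θ) ^ (α-1)) θ := by
    intro θ hθ
    have h0 : (0:ℝ) < 1 + θ := by have := Set.mem_Ioi.mp hθ; linarith
    have := (Real.hasDerivAt_rpow_const (x := 1 + θ) (p := α)
      (Or.inl h0.ne')).comp θ ((hasDerivAt_id θ).const_add 1)
    have hgfun : g = fun θ : ℝ => (1 + θ) ^ α := funext hg
    rw [hgfun]
    simpa [Function.comp_def] using this
  have hderivg : ∀ θ ∈ U, deriv g θ = α * (1+θ) ^ (α-1) := fun θ hθ => (h1 θ hθ).deriv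
  set φ' : ℝ → ℝ := fun θ => ψL θ * (α * (1+θ) ^ (α-1)) with hφ'def
  have hφ'cont : ContinuousOn φ' U := by
    apply hψC.continuous.continuousOn.mul
    apply continuousOn_const.mul
    apply ContinuousOn.rpow_const ((continuous_const.add continuous_id).continuousOn)
    intro θ hθ
    have h0 : (0:ℝ) < 1 + θ := by have := Set.mem_Ioi.mp hθ; linarith
    exact Or.inl h0.ne'
  set P : ℝ → ℝ := fun θ => ψL θ * deriv g θ with hPdef
  have hPeq : Set.EqOn P φ' U := fun θ hθ => by
    simp only [hPdef, hφ'def, hderivg θ hθ]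
  have hPcont : ContinuousOn P U := hφ'cont.congr hPeq
  have hsub : ∀ ⦃a : ℝ⦄, a ∈ U → ∀ ⦃b : ℝ⦄, b ∈ U → Set.uIcc a b ⊆ U :=
    Set.ordConnected_Ioi.uIcc_subset
  have hPint : ∀ a ∈ U, ∀ b ∈ U, IntervalIntegrable P volume a b := fun a ha b hb =>
    (hPcont.mono (hsub ha hb)).intervalIntegrable
  have h0U : (0:ℝ) ∈ U := hmemU le_rfl
  have hglP : ∀ τ ∈ U, HasDerivAt gl (φ' τ) τ := by
    intro τ hτ
    have hgl_eq : gl = fun τ => g 0 + ∫ θ in (0:ℝ)..τ, P θ := funext hgl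
    rw [hgl_eq]
    have := (intervalIntegral.integral_hasDerivAt_right (hPint 0 h0U τ hτ)
      (hPcont.stronglyMeasurableAtFilter hU τ hτ)
      (hPcont.continuousAt (hU.mem_nhds hτ)))
    rw [hPeq hτ] at this
    exact this.const_add (g 0)
  have hglcont : ContinuousOn gl U := fun τ hτ =>
    ((hglP τ hτ).continuousAt).continuousWithinAt
  set k : ℝ → ℝ := fun τ => τ * gl τ with hkdef
  have hkcont : ContinuousOn k U := continuousOn_id.mul hglcont
  have hkint : ∀ a ∈ U, ∀ b ∈ U, IntervalIntegrable k volume a b := fun a ha b hb =>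
    (hkcont.mono (hsub ha hb)).intervalIntegrable
  have hhl' : ∀ s ∈ U, HasDerivAt hl (k s) s := by
    intro s hs
    have hhl_eq : hl = fun s => ∫ τ in (0:ℝ)..s, k τ := funext hhl
    rw [hhl_eq]
    exact intervalIntegral.integral_hasDerivAt_right (hkint 0 h0U s hs)
      (hkcont.stronglyMeasurableAtFilter hU s hs)
      (hkcont.continuousAt (hU.mem_nhds hs))
  have hderiv1 : ∀ s ∈ U, deriv hl s = s * gl s := fun s hs => (hhl' s hs).deriv
  have hk' : ∀ s ∈ U, HasDerivAt k (gl s + s * φ' s) s := by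
    intro s hs
    have := (hasDerivAt_id s).mul (hglP s hs)
    simp only [id_eq, one_mul] at this
    exact this
  have hderiv2 : ∀ s ∈ U, deriv (deriv hl) s = gl s + s * φ' s := by
    intro s hs
    have hev : deriv hl =ᶠ[nhds s] k :=
      Filter.eventuallyEq_of_mem (hU.mem_nhds hs) (fun x hx => hderiv1 x hx)
    rw [hev.deriv_eq]
    exact (hk' s hs).deriv
  -- smoothness
  have hC2 : ContDiffOn ℝ 2 hl (Set.Ici 0) := by
    have hC2U : ContDiffOn ℝ 2 hl U := by
      have h2 : (2 : WithTop ℕ∞) = 1 + 1 := by norm_num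
      rw [h2, contDiffOn_succ_iff_deriv_of_isOpen hU]
      refine ⟨fun s hs => ((hhl' s hs).differentiableAt).differentiableWithinAt, by simp, ?_⟩
      have hkC1 : ContDiffOn ℝ 1 k U := by
        have h1' : (1 : WithTop ℕ∞) = 0 + 1 := by norm_num
        rw [h1', contDiffOn_succ_iff_deriv_of_isOpen hU]
        refine ⟨fun s hs => ((hk' s hs).differentiableAt).differentiableWithinAt, by simp, ?_⟩
        rw [contDiffOn_zero]
        have : ContinuousOn (fun s => gl s + s * φ' s) U :=
          hglcont.add (continuousOn_id.mul hφ'cont)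
        exact this.congr (fun s hs => (hk' s hs).deriv)
      exact hkC1.congr (fun s hs => hderiv1 s hs)
    exact hC2U.mono (fun s hs => hmemU hs)
  -- value of g at 0
  have hg0 : g 0 = 1 := by rw [hg]; norm_num
  -- gl equals (1+s)^α on [0, 3L/2]
  have hglval : ∀ s : ℝ, 0 ≤ s → s ≤ 3 * L / 2 → gl s = (1+s) ^ α := by
    intro s hs0 hs1
    have huIcc : Set.uIcc (0:ℝ) s = Set.Icc 0 s := Set.uIcc_of_le hs0
    have hsubU : Set.uIcc (0:ℝ) s ⊆ U := hsub h0U (hmemU hs0)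
    have hint : ∫ θ in (0:ℝ)..s, P θ = g s - g 0 := by
      have hEq : Set.EqOn P (fun θ => α * (1+θ) ^ (α-1)) (Set.uIcc 0 s) := by
        intro θ hθ
        rw [huIcc] at hθ
        have hθU : θ ∈ U := hsubU (by rw [huIcc]; exact hθ)
        have hψ1' : ψL θ = 1 := hψ1 θ ⟨hθ.1, le_trans hθ.2 hs1⟩
        simp [hPdef, hψ1', hderivg θ hθU]
      rw [intervalIntegral.integral_congr hEq]
      exact intervalIntegral.integral_eq_sub_of_hasDerivAt
        (fun x hx => h1 x (hsubU hx))
        ((hφ'cont.mono hsubU).congr (fun θ hθ => by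
          have hψ1' : ψL θ = 1 := by
            rw [huIcc] at hθ
            exact hψ1 θ ⟨hθ.1, le_trans hθ.2 hs1⟩
          simp [hφ'def, hψ1'])).intervalIntegrable
    rw [hgl, hint, hg0, hg]
    ring
  -- monotonicity of gl on [0, ∞)
  have hglmono : ∀ a b : ℝ, 0 ≤ a → a ≤ b → gl a ≤ gl b := by
    intro a b ha hab
    have haU : a ∈ U := hmemU ha
    have hbU : b ∈ U := hmemU (le_trans ha hab)
    have hsplit : (∫ θ in (0:ℝ)..a, P θ) + (∫ θ in a..b, P θ) = ∫ θ in (0:ℝ)..b, P θ :=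
      intervalIntegral.integral_add_adjacent_intervals (hPint 0 h0U a haU) (hPint a haU b hbU)
    have hnn : 0 ≤ ∫ θ in a..b, P θ := by
      apply intervalIntegral.integral_nonneg hab
      intro u hu
      have huU : u ∈ U := hmemU (le_trans ha hu.1)
      rw [show P u = φ' u from hPeq huU]
      have h0u : (0:ℝ) < 1 + u := by have := Set.mem_Ioi.mp huU; linarith
      have := (hψ01 u).1
      positivity
    rw [hgl a, hgl b, ← hsplit]
    linarith
  have hgl1 : ∀ s : ℝ, 0 ≤ s → 1 ≤ gl s := by
    intro s hs
    have h0 : gl 0 = 1 := by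
      rw [hglval 0 le_rfl (by linarith)]; norm_num
    linarith [hglmono 0 s le_rfl hs]
  -- upper bound gl s ≤ (1+s)^α for s ≥ 0
  have hglub : ∀ s : ℝ, 0 ≤ s → gl s ≤ (1+s) ^ α := by
    intro s hs
    have hsubU : Set.uIcc (0:ℝ) s ⊆ U := hsub h0U (hmemU hs)
    have hφ''int : IntervalIntegrable (fun θ => α * (1+θ) ^ (α-1)) volume 0 s := by
      apply ContinuousOn.intervalIntegrable
      apply continuousOn_const.mul
      apply ContinuousOn.rpow_const ((continuous_const.add continuous_id).continuousOn)
      intro θ hθ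
      have h0θ : (0:ℝ) < 1 + θ := by have := Set.mem_Ioi.mp (hsubU hθ); linarith
      exact Or.inl h0θ.ne'
    have hmono : (∫ θ in (0:ℝ)..s, P θ) ≤ ∫ θ in (0:ℝ)..s, α * (1+θ) ^ (α-1) := by
      apply intervalIntegral.integral_mono_on hs
        ((hPcont.mono hsubU).intervalIntegrable) hφ''int
      intro x hx
      have hxU : x ∈ U := hmemU hx.1
      rw [show P x = φ' x from hPeq hxU]
      have h0x : (0:ℝ) < 1 + x := by linarith [hx.1]
      have h1ψ := (hψ01 x).2
      have hnn : 0 ≤ α * (1+x) ^ (α-1) := by positivity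
      calc ψL x * (α * (1+x) ^ (α-1)) ≤ 1 * (α * (1+x) ^ (α-1)) :=
            mul_le_mul_of_nonneg_right h1ψ hnn
        _ = α * (1+x) ^ (α-1) := one_mul _
    have hint : ∫ θ in (0:ℝ)..s, α * (1+θ) ^ (α-1) = g s - g 0 :=
      intervalIntegral.integral_eq_sub_of_hasDerivAt
        (fun x hx => h1 x (hsubU hx)) hφ''int
    calc gl s = g 0 + ∫ θ in (0:ℝ)..s, P θ := hgl s
      _ ≤ g 0 + ∫ θ in (0:ℝ)..s, α * (1+θ) ^ (α-1) := by linarith [hmono]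
      _ = g s := by rw [hint]; ring
      _ = (1+s) ^ α := hg s
  have h2pos : (0:ℝ) < 2 ^ α := Real.rpow_pos_of_pos two_pos α
  have h2one : (1:ℝ) ≤ 2 ^ α := Real.one_le_rpow one_le_two hα
  -- gl bounded by (1+2L)^α
  have hgl2L : ∀ s : ℝ, 0 ≤ s → gl s ≤ (1+2*L) ^ α := by
    intro s hs
    rcases le_or_gt s (2*L) with h | h
    · calc gl s ≤ (1+s) ^ α := hglub s hs
        _ ≤ (1+2*L) ^ α := Real.rpow_le_rpow (by linarith) (by linarith) hα
    · have h2LU : (2*L : ℝ) ∈ U := hmemU (by linarith)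
      have hsU : s ∈ U := hmemU hs
      have hzero : (∫ θ in (2*L)..s, P θ) = 0 := by
        rw [intervalIntegral.integral_congr (g := fun _ => (0:ℝ)) ?_,
          intervalIntegral.integral_zero]
        intro θ hθ
        rw [Set.uIcc_of_le (by linarith : 2*L ≤ s)] at hθ
        simp [hPdef, hψ0 θ hθ.1]
      have hsplit := intervalIntegral.integral_add_adjacent_intervals
        (hPint 0 h0U (2*L) h2LU) (hPint (2*L) h2LU s hsU)
      have heq : gl s = gl (2*L) := by rw [hgl s, hgl (2*L), ← hsplit, hzero]; ring
      rw [heq]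
      exact hglub (2*L) (by linarith)
  -- doubling estimate
  have hgldbl : ∀ s : ℝ, 0 ≤ s → gl s ≤ 2 ^ α * gl (s/2) := by
    intro s hs
    rcases le_or_gt s (3*L) with h | h
    · have h2 : gl (s/2) = (1+s/2) ^ α := hglval (s/2) (by linarith) (by linarith)
      rw [h2]
      calc gl s ≤ (1+s) ^ α := hglub s hs
        _ ≤ (2*(1+s/2)) ^ α := Real.rpow_le_rpow (by linarith) (by linarith) hα
        _ = 2 ^ α * (1+s/2) ^ α := Real.mul_rpow (by norm_num) (by linarith)
    · have h32 : gl (3*L/2) = (1+3*L/2) ^ α := hglval _ (by linarith) le_rfl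
      have hm : gl (3*L/2) ≤ gl (s/2) := hglmono _ _ (by linarith) (by linarith)
      calc gl s ≤ (1+2*L) ^ α := hgl2L s hs
        _ ≤ (2*(1+3*L/2)) ^ α := Real.rpow_le_rpow (by linarith) (by linarith) hα
        _ = 2 ^ α * (1+3*L/2) ^ α := Real.mul_rpow (by norm_num) (by linarith)
        _ = 2 ^ α * gl (3*L/2) := by rw [h32]
        _ ≤ 2 ^ α * gl (s/2) := by nlinarith
  -- nonnegativity and bound for the second term of h''
  have hBnn : ∀ s : ℝ, 0 ≤ s → 0 ≤ s * φ' s := by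
    intro s hs
    have h0s : (0:ℝ) < 1 + s := by linarith
    have hψge := (hψ01 s).1
    have : (0:ℝ) ≤ ψL s * (α * (1+s) ^ (α-1)) := by positivity
    exact mul_nonneg hs this
  have hBub : ∀ s : ℝ, 0 ≤ s → s * φ' s ≤ α * 2 ^ α * gl s := by
    intro s hs
    have hglnn : (0:ℝ) ≤ gl s := le_trans zero_le_one (hgl1 s hs)
    rcases le_or_gt (2*L) s with h | h
    · have : φ' s = 0 := by simp [hφ'def, hψ0 s h]
      rw [this, mul_zero]
      positivity
    · have h0s : (0:ℝ) < 1 + s := by linarith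
      have hψle := (hψ01 s).2
      have hrnn : (0:ℝ) ≤ (1+s) ^ (α-1) := Real.rpow_nonneg (by linarith) _
      have hpow : (1+s) * (1+s) ^ (α-1) = (1+s) ^ α := by
        rw [mul_comm, ← Real.rpow_add_one h0s.ne' (α-1)]; ring_nf
      have hstep : s * φ' s ≤ α * (1+s) ^ α := by
        calc s * φ' s ≤ s * (1 * (α * (1+s) ^ (α-1))) := by
              apply mul_le_mul_of_nonneg_left _ hs
              exact mul_le_mul_of_nonneg_right hψle (by positivity)
          _ = α * (s * (1+s) ^ (α-1)) := by ring
          _ ≤ α * ((1+s) * (1+s) ^ (α-1)) := by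
              apply mul_le_mul_of_nonneg_left _ hα
              exact mul_le_mul_of_nonneg_right (by linarith) hrnn
          _ = α * (1+s) ^ α := by rw [hpow]
      rcases le_or_gt s (3*L/2) with h2 | h2
      · rw [← hglval s hs h2] at hstep
        nlinarith [mul_nonneg hα hglnn]
      · have h32 : gl (3*L/2) = (1+3*L/2) ^ α := hglval _ (by linarith) le_rfl
        have hm : gl (3*L/2) ≤ gl s := hglmono _ _ (by linarith) (by linarith)
        have hkey : (1+s) ^ α ≤ 2 ^ α * gl s := by
          calc (1+s) ^ α ≤ (2*(1+3*L/2)) ^ α :=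
                Real.rpow_le_rpow (by linarith) (by linarith) hα
            _ = 2 ^ α * (1+3*L/2) ^ α := Real.mul_rpow (by norm_num) (by linarith)
            _ = 2 ^ α * gl (3*L/2) := by rw [h32]
            _ ≤ 2 ^ α * gl s := by nlinarith
        calc s * φ' s ≤ α * (1+s) ^ α := hstep
          _ ≤ α * (2 ^ α * gl s) := mul_le_mul_of_nonneg_left hkey hα
          _ = α * 2 ^ α * gl s := by ring
  refine ⟨hC2, ⟨(1+2*L) ^ α * (1 + α * 2 ^ α), fun s hs => ?_⟩, fun s hspos => ?_, fun s hs => ?_⟩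
  · -- boundedness of h''
    have hsU := hmemU hs
    rw [hderiv2 s hsU]
    have hB := hBnn s hs
    have hBu := hBub s hs
    have hg1 := hgl1 s hs
    have hg2 := hgl2L s hs
    rw [abs_of_nonneg (by linarith)]
    nlinarith [mul_le_mul_of_nonneg_left hg2 (mul_nonneg hα h2pos.le)]
  · -- the two differential inequalities for s > 0
    have hs := hspos.le
    have hsU := hmemU hs
    have hd1 : deriv hl s / s = gl s := by
      rw [hderiv1 s hsU, mul_comm, mul_div_assoc, div_self hspos.ne', mul_one]
    have hd2 := hderiv2 s hsU
    have hB := hBnn s hs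
    have hBu := hBub s hs
    have hg1 := hgl1 s hs
    have hglnn : (0:ℝ) ≤ gl s := by linarith
    constructor
    · rw [hd1, hd2]; linarith
    · rw [hd1, hd2]
      nlinarith [mul_nonneg (mul_nonneg hα h2pos.le) hglnn,
        mul_nonneg h2pos.le hglnn, mul_nonneg hα hglnn]
  · -- h' s * s ≤ c * h s
    have hsU := hmemU hs
    rw [hderiv1 s hsU]
    have hhalfU : s/2 ∈ U := hmemU (by linarith)
    have hglhalfnn : (0:ℝ) ≤ gl (s/2) := le_trans zero_le_one (hgl1 _ (by linarith))
    have hglnn : (0:ℝ) ≤ gl s := le_trans zero_le_one (hgl1 s hs)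
    have hlow : s^2/4 * gl (s/2) ≤ hl s := by
      have hint1 : (∫ τ in (0:ℝ)..(s/2), k τ) + (∫ τ in (s/2)..s, k τ) = hl s := by
        rw [hhl]
        exact intervalIntegral.integral_add_adjacent_intervals
          (hkint 0 h0U _ hhalfU) (hkint _ hhalfU s hsU)
      have h1nn : 0 ≤ ∫ τ in (0:ℝ)..(s/2), k τ := by
        apply intervalIntegral.integral_nonneg (by linarith)
        intro u hu
        exact mul_nonneg hu.1 (le_trans zero_le_one (hgl1 u hu.1))
      have h2ge : (s - s/2) * (s/2 * gl (s/2)) ≤ ∫ τ in (s/2)..s, k τ := by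
        have hmn := intervalIntegral.integral_mono_on
          (f := fun _ => s/2 * gl (s/2)) (g := k) (by linarith : s/2 ≤ s)
          intervalIntegrable_const (hkint _ hhalfU s hsU) ?_
        · rwa [intervalIntegral.integral_const, smul_eq_mul] at hmn
        · intro x hx
          exact mul_le_mul hx.1 (hglmono _ _ (by linarith) hx.1) hglhalfnn
            (by linarith [hx.1])
      nlinarith [h1nn, h2ge, hint1]
    have hdbl := hgldbl s hs
    nlinarith [mul_le_mul_of_nonneg_left hdbl (sq_nonneg s),
      mul_le_mul_of_nonneg_left hlow h2pos.le,
      mul_nonneg (sq_nonneg s) hglhalfnn, sq_nonneg s]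


open MeasureTheory

/-- regularity and uniform (in `L`) differential inequalities for `h_L`. -/
theorem truncated_weight_diff_ineq (α : ℝ) (hα : 0 ≤ α)
    (ψ : ℝ → ℝ → ℝ) (cψ : ℝ) (hcψ : 0 < cψ)
    (hψC : ∀ L : ℝ, 1 ≤ L → ContDiff ℝ 1 (ψ L))
    (hψ01 : ∀ L : ℝ, 1 ≤ L → ∀ θ : ℝ, 0 ≤ ψ L θ ∧ ψ L θ ≤ 1)
    (hψ' : ∀ L : ℝ, 1 ≤ L → ∀ θ : ℝ, deriv (ψ L) θ ≤ 0)
    (hψ'bd : ∀ L : ℝ, 1 ≤ L → ∀ θ : ℝ, |deriv (ψ L) θ| ≤ cψ / L)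
    (hψ1 : ∀ L : ℝ, 1 ≤ L → ∀ θ ∈ Set.Icc (0:ℝ) (3 * L / 2), ψ L θ = 1)
    (hψ0 : ∀ L : ℝ, 1 ≤ L → ∀ θ : ℝ, 2 * L ≤ θ → ψ L θ = 0)
    (g : ℝ → ℝ) (hg : ∀ θ, g θ = (1 + θ) ^ α)
    (gL : ℝ → ℝ → ℝ)
    (hgL : ∀ L τ : ℝ, gL L τ = g 0 + ∫ θ in (0:ℝ)..τ, ψ L θ * deriv g θ)
    (hL : ℝ → ℝ → ℝ)
    (hhL : ∀ L s : ℝ, hL L s = ∫ τ in (0:ℝ)..s, τ * gL L τ) :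
    (∀ L : ℝ, 1 ≤ L → ContDiffOn ℝ 2 (hL L) (Set.Ici 0)) ∧
    (∀ L : ℝ, 1 ≤ L → ∃ C : ℝ, ∀ s : ℝ, 0 ≤ s → |deriv (deriv (hL L)) s| ≤ C) ∧
    (∃ c : ℝ, 0 < c ∧ ∀ L : ℝ, 1 ≤ L →
      (∀ s : ℝ, 0 < s →
        deriv (hL L) s / s ≤ deriv (deriv (hL L)) s ∧
        deriv (deriv (hL L)) s ≤ c * (α + 1) * (deriv (hL L) s / s)) ∧
      (∀ s : ℝ, 0 ≤ s → deriv (hL L) s * s ≤ c * hL L s)) := by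
  have key := fun (L' : ℝ) (h : 1 ≤ L') => aux_master α hα (ψ L') L' h (hψC L' h)
    (hψ01 L' h) (hψ1 L' h) (hψ0 L' h) g hg (gL L') (hgL L') (hL L') (hhL L')
  have hcpos : (0:ℝ) < 8 * 2 ^ α + 1 := by
    have := Real.rpow_pos_of_pos (by norm_num : (0:ℝ) < 2) α
    linarith
  exact ⟨fun L' h => (key L' h).1, fun L' h => (key L' h).2.1,
    8 * 2 ^ α + 1, hcpos,
    fun L' h => ⟨(key L' h).2.2.1, (key L' h).2.2.2⟩⟩
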